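/- Let ⟨x,y⟩₁ = −x₀y₀ + x₁y₁ + x₂y₂ + x₃y₃ + x₄y₄ denote the Lorentzian bilinear form on ℝ⁵. Let a, b be nonzero real numbers and c a real number with 1/a² − c² − 1/b² = 1, and define Θ(t,u) = (cosh(a u)/a, sinh(a u)/a, cos(b t)/b, sin(b t)/b, c). Then for all (t,u): ⟨Θ, Θ⟩₁ = −1 (so Θ takes values in H⁴ = {x ∈ ℝ⁵ : ⟨x,x⟩₁ = −1}), and ⟨∂ₜΘ, ∂ₜΘ⟩₁ = 1, ⟨∂ᵤΘ, ∂ᵤΘ⟩₁ = 1, ⟨∂ₜΘ, ∂ᵤΘ⟩₁ = 0. -/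

import Mathlib

/-- The Lorentzian bilinear form on `ℝ⁵` with timelike coordinate `x₀`. -/
def lor5 (x y : Fin 5 → ℝ) : ℝ :=
  -(x 0 * y 0) + x 1 * y 1 + x 2 * y 2 + x 3 * y 3 + x 4 * y 4

lemma tderiv (a b c : ℝ) (hb : b ≠ 0) (t u : ℝ) :
    deriv (fun t' : ℝ => ![Real.cosh (a * u) / a, Real.sinh (a * u) / a,
        Real.cos (b * t') / b, Real.sin (b * t') / b, c]) t =
      ![0, 0, -Real.sin (b * t), Real.cos (b * t), 0] := by
  apply HasDerivAt.deriv
  rw [hasDerivAt_pi]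
  intro i
  have hid : HasDerivAt (fun t' : ℝ => b * t') b t := by
    simpa using (hasDerivAt_id t).const_mul b
  fin_cases i <;>
    simp only [Fin.isValue, Matrix.cons_val_zero, Matrix.cons_val_one, Matrix.head_cons,
      Matrix.cons_val_two, Matrix.tail_cons, Matrix.cons_val_three, Matrix.cons_val_four,
      Matrix.cons_val_fin_one]
  · exact hasDerivAt_const _ _
  · exact hasDerivAt_const _ _
  · have h := ((Real.hasDerivAt_cos (b * t)).comp t hid).div_const b
    convert h using 1
    case e'_4 => rfl
    all_goals simp [Function.comp_def, hb, neg_div]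
  · have h := ((Real.hasDerivAt_sin (b * t)).comp t hid).div_const b
    convert h using 1
    case e'_4 => rfl
    all_goals simp [Function.comp_def, hb]
  · exact hasDerivAt_const _ _

lemma uderiv (a b c : ℝ) (ha : a ≠ 0) (t u : ℝ) :
    deriv (fun u' : ℝ => ![Real.cosh (a * u') / a, Real.sinh (a * u') / a,
        Real.cos (b * t) / b, Real.sin (b * t) / b, c]) u =
      ![Real.sinh (a * u), Real.cosh (a * u), 0, 0, 0] := by
  apply HasDerivAt.deriv
  rw [hasDerivAt_pi]
  intro i
  have hid : HasDerivAt (fun u' : ℝ => a * u') a u := by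
    simpa using (hasDerivAt_id u).const_mul a
  fin_cases i <;>
    simp only [Fin.isValue, Matrix.cons_val_zero, Matrix.cons_val_one, Matrix.head_cons,
      Matrix.cons_val_two, Matrix.tail_cons, Matrix.cons_val_three, Matrix.cons_val_four,
      Matrix.cons_val_fin_one]
  · have h := ((Real.hasDerivAt_cosh (a * u)).comp u hid).div_const a
    convert h using 1
    case e'_4 => rfl
    all_goals simp [Function.comp_def, ha]
  · have h := ((Real.hasDerivAt_sinh (a * u)).comp u hid).div_const a
    convert h using 1
    case e'_4 => rfl
    all_goals simp [Function.comp_def, ha]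
  · exact hasDerivAt_const _ _
  · exact hasDerivAt_const _ _
  · exact hasDerivAt_const _ _

/-- Case (2) of Proposition 4.3: the product of a hyperbola and a circle is a
unit-speed orthogonal parametrization lying in `H⁴ ⊂ ℝ⁵₁`. -/
theorem stmt_8 (a b c : ℝ) (ha : a ≠ 0) (hb : b ≠ 0)
    (hc : 1 / a ^ 2 - c ^ 2 - 1 / b ^ 2 = 1)
    (Θ : ℝ → ℝ → Fin 5 → ℝ)
    (hΘ : ∀ t u : ℝ, Θ t u =
      ![Real.cosh (a * u) / a, Real.sinh (a * u) / a,
        Real.cos (b * t) / b, Real.sin (b * t) / b, c]) :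
    ∀ t u : ℝ,
      lor5 (Θ t u) (Θ t u) = -1 ∧
      lor5 (deriv (fun t' => Θ t' u) t) (deriv (fun t' => Θ t' u) t) = 1 ∧
      lor5 (deriv (fun u' => Θ t u') u) (deriv (fun u' => Θ t u') u) = 1 ∧
      lor5 (deriv (fun t' => Θ t' u) t) (deriv (fun u' => Θ t u') u) = 0 := by
  intro t u
  have ht : (fun t' => Θ t' u) = fun t' => ![Real.cosh (a * u) / a, Real.sinh (a * u) / a,
      Real.cos (b * t') / b, Real.sin (b * t') / b, c] := funext fun t' => hΘ t' u
  have hu : (fun u' => Θ t u') = fun u' => ![Real.cosh (a * u') / a, Real.sinh (a * u') / a,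
      Real.cos (b * t) / b, Real.sin (b * t) / b, c] := funext fun u' => hΘ t u'
  rw [ht, hu, tderiv a b c hb t u, uderiv a b c ha t u, hΘ]
  have hs : Real.sin (b * t) ^ 2 + Real.cos (b * t) ^ 2 = 1 := Real.sin_sq_add_cos_sq _
  have hh : Real.cosh (a * u) ^ 2 - Real.sinh (a * u) ^ 2 = 1 := Real.cosh_sq_sub_sinh_sq _
  have ha2 : a ^ 2 ≠ 0 := pow_ne_zero 2 ha
  have hb2 : b ^ 2 ≠ 0 := pow_ne_zero 2 hb
  refine ⟨?_, ?_, ?_, ?_⟩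
  · simp only [lor5, Matrix.cons_val_zero, Matrix.cons_val_one, Matrix.head_cons,
      Matrix.cons_val_two, Matrix.tail_cons, Matrix.cons_val_three, Matrix.cons_val_four,
      Matrix.cons_val_fin_one]
    field_simp at hc ⊢
    linear_combination (-b^2) * hh + a^2 * hs - hc
  · simp [lor5]; nlinarith [hs]
  · simp [lor5]; nlinarith [hh]
  · simp [lor5]
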